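/- The index of inertia Inert(ℓ,ℓ',ℓ'') = (τ(ℓ,ℓ',ℓ'') - ∂dim(ℓ,ℓ',ℓ'') + n)/2 is an integer for all triples of Lagrangian planes, where ∂dim(ℓ,ℓ',ℓ'') = dim(ℓ∩ℓ') - dim(ℓ∩ℓ'') + dim(ℓ'∩ℓ''). -/

import Mathlib

open Matrix Complex

noncomputable section

/-- Phase space ℝ^{2n} = ℝ^n_x × ℝ^n_p. -/
abbrev V (n : ℕ) := (Fin n → ℝ) × (Fin n → ℝ)

/-- Standard symplectic form σ(z,z') = p·x' - p'·x. -/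
def Omega (n : ℕ) (z w : V n) : ℝ := z.2 ⬝ᵥ w.1 - w.2 ⬝ᵥ z.1

/-- Lagrangian plane: n-dimensional subspace on which σ vanishes. -/
def IsLagrangian (n : ℕ) (L : Submodule ℝ (V n)) : Prop :=
  Module.finrank ℝ L = n ∧ ∀ z ∈ L, ∀ w ∈ L, Omega n z w = 0

/-- Symplectic linear map. -/
def IsSymplectic (n : ℕ) (S : V n →ₗ[ℝ] V n) : Prop :=
  Function.Bijective S ∧ ∀ z w, Omega n (S z) (S w) = Omega n z w

/-- Dimension of a maximal subspace on which Q is positive. -/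
def posIndex {E : Type*} [AddCommGroup E] [Module ℝ E] (Q : E → ℝ) : ℕ :=
  sSup {k | ∃ W : Submodule ℝ E, Module.finrank ℝ W = k ∧ ∀ v ∈ W, v ≠ 0 → 0 < Q v}

def negIndex {E : Type*} [AddCommGroup E] [Module ℝ E] (Q : E → ℝ) : ℕ :=
  posIndex fun v => -Q v

/-- σ(z,z') + σ(z',z'') + σ(z'',z) on ℓ × ℓ' × ℓ''. -/
def tripleForm (n : ℕ) (L L' L'' : Submodule ℝ (V n)) : (L × L' × L'') → ℝ :=
  fun t => Omega n t.1 t.2.1 + Omega n t.2.1 t.2.2 + Omega n t.2.2 t.1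

/-- Kashiwara signature τ(ℓ,ℓ',ℓ''). -/
def tau (n : ℕ) (L L' L'' : Submodule ℝ (V n)) : ℤ :=
  (posIndex (tripleForm n L L' L'') : ℤ) - negIndex (tripleForm n L L' L'')

/-- ∂dim(ℓ,ℓ',ℓ''). -/
def ddim (n : ℕ) (L L' L'' : Submodule ℝ (V n)) : ℤ :=
  (Module.finrank ℝ ↥(L ⊓ L') : ℤ) - Module.finrank ℝ ↥(L ⊓ L'')
    + Module.finrank ℝ ↥(L' ⊓ L'')

/-- Index of inertia. -/
def Inert (n : ℕ) (L L' L'' : Submodule ℝ (V n)) : ℤ :=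
  (tau n L L' L'' - ddim n L L' L'' + n) / 2

/-- Real and imaginary parts of a complex matrix. -/
def reM (n : ℕ) (u : Matrix (Fin n) (Fin n) ℂ) : Matrix (Fin n) (Fin n) ℝ :=
  of fun i j => (u i j).re

def imM (n : ℕ) (u : Matrix (Fin n) (Fin n) ℂ) : Matrix (Fin n) (Fin n) ℝ :=
  of fun i j => (u i j).im

/-- The identification A+iB ↦ [[A,-B],[B,A]] acting on ℝ^{2n}. -/
def uReal (n : ℕ) (u : Matrix (Fin n) (Fin n) ℂ) : V n →ₗ[ℝ] V n where
  toFun z := (reM n u *ᵥ z.1 - imM n u *ᵥ z.2, imM n u *ᵥ z.1 + reM n u *ᵥ z.2)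
  map_add' a b := by
    ext i <;> (simp [Matrix.mulVec_add]; try ring)
  map_smul' c a := by
    ext i <;> (simp [Matrix.mulVec_smul]; try ring)

/-- The momentum plane ℓ_p = 0 × ℝ^n. -/
def ellP (n : ℕ) : Submodule ℝ (V n) := Submodule.prod ⊥ ⊤



section Aux
open Module Submodule Finset

variable {E : Type*} [AddCommGroup E] [Module ℝ E] [FiniteDimensional ℝ E]

section Sylvester

variable {N : ℕ} (B : LinearMap.BilinForm ℝ E) (v : Basis (Fin N) ℝ E)
  (hv : B.IsOrthoᵢ v)

include hv

lemma basis_apply_eq (m : E) (j : Fin N) :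
    B (v j) m = v.repr m j * B (v j) (v j) := by
  nth_rewrite 1 [← v.sum_repr m]
  rw [map_sum]
  rw [Finset.sum_eq_single j]
  · simp [smul_eq_mul]
  · intro i _ hij
    rw [_root_.map_smul, show (B (v j)) (v i) = 0 from hv (Ne.symm hij)]
    simp
  · simp

lemma self_apply_eq (hsymm : B.IsSymm) (m : E) :
    B m m = ∑ j, v.repr m j * v.repr m j * B (v j) (v j) := by
  nth_rewrite 1 [← v.sum_repr m]
  rw [map_sum, LinearMap.sum_apply]
  refine Finset.sum_congr rfl fun j _ => ?_
  rw [LinearMap.map_smul₂, smul_eq_mul, basis_apply_eq B v hv]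
  ring

omit [FiniteDimensional ℝ E] hv in
lemma span_finrank (S : Finset (Fin N)) :
    finrank ℝ (span ℝ (v '' S)) = S.card := by
  have li : LinearIndependent ℝ (fun i : S => v i) :=
    v.linearIndependent.comp Subtype.val Subtype.val_injective
  have : Set.range (fun i : S => v i) = v '' S := by
    ext x; simp
  rw [← this, finrank_span_eq_card li]
  simp

lemma posIndex_eq_card (hsymm : B.IsSymm) :
    posIndex (fun m => B m m) = (Finset.univ.filter fun i => 0 < B (v i) (v i)).card := by
  set P := Finset.univ.filter fun i => 0 < B (v i) (v i) with hP
  apply IsGreatest.csSup_eq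
  constructor
  · refine ⟨span ℝ (v '' P), span_finrank v P, ?_⟩
    intro m hm hm0
    show 0 < B m m
    rw [self_apply_eq B v hv hsymm]
    apply Finset.sum_pos'
    · intro j _
      by_cases hj : j ∈ P
      · nlinarith [mul_self_nonneg (v.repr m j),
          show 0 < B (v j) (v j) by simpa [hP] using hj]
      · have : v.repr m j = 0 := by
          have := Basis.repr_support_subset_of_mem_span v (↑P) hm
          by_contra h
          exact hj (by simpa using this (Finsupp.mem_support_iff.2 h))
        simp [this]
    · have : ∃ j, v.repr m j ≠ 0 := by
        by_contra h
        push_neg at h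
        apply hm0
        have : v.repr m = 0 := Finsupp.ext h
        simpa [this] using (v.sum_repr m).symm
      obtain ⟨j, hj⟩ := this
      have hjP : j ∈ P := by
        have := Basis.repr_support_subset_of_mem_span v (↑P) hm
        simpa using this (Finsupp.mem_support_iff.2 hj)
      refine ⟨j, Finset.mem_univ j, ?_⟩
      have : 0 < B (v j) (v j) := by simpa [hP] using hjP
      have h2 : 0 < v.repr m j * v.repr m j := by
        rcases hj.lt_or_gt with h | h <;> nlinarith
      exact mul_pos h2 this
  · rintro k ⟨W, hWrank, hWpos⟩
    -- W disjoint from span of complement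
    set C := Pᶜ with hC
    have hdisj : W ⊓ span ℝ (v '' C) = ⊥ := by
      rw [eq_bot_iff]
      rintro m ⟨hmW, hmC⟩
      rw [Submodule.mem_bot]
      by_contra h0
      have hpos := hWpos m hmW h0
      have hle : B m m ≤ 0 := by
        rw [self_apply_eq B v hv hsymm]
        apply Finset.sum_nonpos
        intro j _
        by_cases hj : j ∈ C
        · have hj' : j ∉ P := by simpa [hC] using hj
          have : B (v j) (v j) ≤ 0 := by
            by_contra h; exact hj' (by simp [hP]; linarith)
          nlinarith [mul_self_nonneg (v.repr m j)]
        · have : v.repr m j = 0 := by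
            have := Basis.repr_support_subset_of_mem_span v (↑C) hmC
            by_contra h
            exact hj (by simpa using this (Finsupp.mem_support_iff.2 h))
          simp [this]
      linarith
    have h1 : finrank ℝ W + finrank ℝ (span ℝ (v '' C)) ≤ finrank ℝ E := by
      have := Submodule.finrank_sup_add_finrank_inf_eq W (span ℝ (v '' C))
      rw [hdisj] at this
      simp only [finrank_bot, add_zero] at this
      rw [← this]
      exact Submodule.finrank_le _
    rw [hWrank, span_finrank v C] at h1
    have hcc : C.card = N - P.card := by
      simp [hC, Finset.card_compl]
    have hpc : P.card ≤ N := by simpa using Finset.card_le_card (Finset.subset_univ P)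
    have hN : finrank ℝ E = N := by
      rw [finrank_eq_card_basis v, Fintype.card_fin]
    omega



lemma radical_eq_card (hsymm : B.IsSymm) :
    finrank ℝ (B.orthogonal ⊤) = (Finset.univ.filter fun i => B (v i) (v i) = 0).card := by
  set Z := Finset.univ.filter fun i => B (v i) (v i) = 0 with hZ
  have hsub : span ℝ (v '' Z) ≤ B.orthogonal ⊤ := by
    rw [Submodule.span_le]
    rintro x ⟨i, hi, rfl⟩
    intro w _
    have h0 : B (v i) (v i) = 0 := by
      simp only [hZ, Finset.coe_filter, Set.mem_setOf_eq] at hi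
      exact hi.2
    show B w (v i) = 0
    have := LinearMap.isSymm_def.mp (LinearMap.BilinForm.isSymm_iff.mp hsymm) w (v i)
    rw [RingHom.id_apply] at this
    rw [this, basis_apply_eq B v hv, h0, mul_zero]
  have hdisj : B.orthogonal ⊤ ⊓ span ℝ (v '' (Zᶜ : Finset (Fin N))) = ⊥ := by
    rw [eq_bot_iff]
    rintro m ⟨hm1, hm2⟩
    rw [Submodule.mem_bot]
    have hall : ∀ j, v.repr m j = 0 := by
      intro j
      by_cases hj : j ∈ Z
      · have := Basis.repr_support_subset_of_mem_span v (↑(Zᶜ : Finset (Fin N))) hm2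
        by_contra h
        have := this (Finsupp.mem_support_iff.2 h)
        simp only [Finset.coe_compl, Set.mem_compl_iff, Finset.mem_coe] at this
        exact this hj
      · have hd : B (v j) (v j) ≠ 0 := by
          by_contra h; exact hj (by simp [hZ, h])
        have h0 : B (v j) m = 0 := hm1 (v j) Submodule.mem_top
        rw [basis_apply_eq B v hv] at h0
        rcases mul_eq_zero.mp h0 with h | h
        · exact h
        · exact absurd h hd
    have hm0 : v.repr m = 0 := by ext j; simpa using hall j
    exact (LinearEquiv.map_eq_zero_iff v.repr).mp hm0
  have hN : finrank ℝ E = N := by rw [finrank_eq_card_basis v, Fintype.card_fin]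
  have hge : Z.card ≤ finrank ℝ (B.orthogonal ⊤) := by
    rw [← span_finrank v Z]
    exact Submodule.finrank_mono hsub
  have hle : finrank ℝ (B.orthogonal ⊤) ≤ Z.card := by
    have h1 := Submodule.finrank_sup_add_finrank_inf_eq (B.orthogonal ⊤)
      (span ℝ (v '' (Zᶜ : Finset (Fin N))))
    rw [hdisj] at h1
    simp only [finrank_bot, add_zero] at h1
    have h2 : finrank ℝ ((B.orthogonal ⊤) ⊔ span ℝ (v '' (Zᶜ : Finset (Fin N))) : Submodule ℝ E)
        ≤ finrank ℝ E := Submodule.finrank_le _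
    rw [h1, span_finrank v] at h2
    have hcc : (Zᶜ : Finset (Fin N)).card = N - Z.card := by simp [Finset.card_compl]
    have hzc : Z.card ≤ N := by simpa using Finset.card_le_card (Finset.subset_univ Z)
    omega
  omega

omit hv in
/-- Sylvester-type count: pos + neg + radical = dim. -/
lemma sylvester_count (hsymm : B.IsSymm) :
    posIndex (fun m => B m m) + posIndex (fun m => -(B m m)) + finrank ℝ (B.orthogonal ⊤)
      = finrank ℝ E := by
  haveI : Invertible (2 : ℝ) := invertibleOfNonzero two_ne_zero
  obtain ⟨v, hv⟩ := LinearMap.BilinForm.exists_orthogonal_basis (LinearMap.BilinForm.isSymm_iff.mp hsymm)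
  have hvneg : (-B).IsOrthoᵢ v := by
    intro i j hij
    have := hv hij
    simp only [Function.onFun] at this ⊢
    simp [this]
  have hsneg : (-B).IsSymm := by
    constructor
    intro x y
    simpa using (hsymm.eq x y)
  have e1 := posIndex_eq_card B v hv hsymm
  have e2 := posIndex_eq_card (-B) v hvneg hsneg
  have e2' : posIndex (fun m => -(B m m)) =
      (Finset.univ.filter fun i => B (v i) (v i) < 0).card := by
    have hfun : (fun m => -(B m m)) = (fun m => (-B) m m) := by funext m; simp
    rw [hfun, e2]
    congr 1
    apply Finset.filter_congr
    intro i _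
    simp [neg_pos]
  have e3 := radical_eq_card B v hv hsymm
  rw [e1, e2', e3]
  -- card partition
  have h1 := Finset.card_filter_add_card_filter_not (s := Finset.univ)
    (p := fun i => 0 < B (v i) (v i))
  have h2 : (Finset.univ.filter fun i => ¬ 0 < B (v i) (v i)) =
      (Finset.univ.filter fun i => B (v i) (v i) < 0) ∪
      (Finset.univ.filter fun i => B (v i) (v i) = 0) := by
    rw [← Finset.filter_or]
    apply Finset.filter_congr
    intro i _
    constructor
    · intro h
      rcases lt_or_eq_of_le (not_lt.mp h) with h' | h'
      · exact Or.inl h'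
      · exact Or.inr h'
    · rintro (h | h) <;> simp [h, le_of_lt, not_lt] <;> linarith
  have h3 : Disjoint (Finset.univ.filter fun i => B (v i) (v i) < 0)
      (Finset.univ.filter fun i => B (v i) (v i) = 0) := by
    rw [Finset.disjoint_filter]
    intro i _ h h'
    rw [h'] at h; exact lt_irrefl 0 h
  rw [h2, Finset.card_union_of_disjoint h3] at h1
  simp only [Finset.card_univ, Fintype.card_fin] at h1
  omega

end Sylvester



open Module Submodule

/-! ### The symplectic form as a bilinear form -/

lemma Omega_add_left (n : ℕ) (z z' w : V n) :
    Omega n (z + z') w = Omega n z w + Omega n z' w := by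
  simp [Omega, add_dotProduct, dotProduct_add]; ring

lemma Omega_add_right (n : ℕ) (z w w' : V n) :
    Omega n z (w + w') = Omega n z w + Omega n z w' := by
  simp [Omega, add_dotProduct, dotProduct_add]; ring

lemma Omega_smul_left (n : ℕ) (c : ℝ) (z w : V n) :
    Omega n (c • z) w = c * Omega n z w := by
  simp [Omega, smul_dotProduct, dotProduct_smul, smul_eq_mul]; ring

lemma Omega_smul_right (n : ℕ) (c : ℝ) (z w : V n) :
    Omega n z (c • w) = c * Omega n z w := by
  simp [Omega, smul_dotProduct, dotProduct_smul, smul_eq_mul]; ring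

lemma Omega_skew (n : ℕ) (z w : V n) : Omega n z w = - Omega n w z := by
  simp only [Omega]; ring

lemma Omega_zero_left (n : ℕ) (w : V n) : Omega n 0 w = 0 := by simp [Omega]

lemma Omega_zero_right (n : ℕ) (z : V n) : Omega n z 0 = 0 := by simp [Omega]

lemma Omega_sub_right (n : ℕ) (z w w' : V n) :
    Omega n z (w - w') = Omega n z w - Omega n z w' := by
  simp [Omega, sub_dotProduct, dotProduct_sub]; ring

/-- `Omega` as a bilinear form. -/
def Om (n : ℕ) : LinearMap.BilinForm ℝ (V n) :=
  LinearMap.mk₂ ℝ (Omega n) (Omega_add_left n) (Omega_smul_left n)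
    (Omega_add_right n) (Omega_smul_right n)

lemma Om_apply (n : ℕ) (z w : V n) : Om n z w = Omega n z w := rfl

lemma Om_nondegenerate (n : ℕ) : (Om n).Nondegenerate := by
  refine LinearMap.BilinForm.Nondegenerate.ofSeparatingLeft ?_
  intro z hz
  have h1 : ∀ i, z.1 i = 0 := by
    intro i
    have := hz (0, Pi.single i 1)
    simpa [Om_apply, Omega, single_dotProduct] using this
  have h2 : ∀ i, z.2 i = 0 := by
    intro i
    have := hz (Pi.single i 1, 0)
    simpa [Om_apply, Omega, dotProduct_single] using this
  ext i
  · exact h1 i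
  · exact h2 i

lemma Om_refl (n : ℕ) : (Om n).IsRefl := by
  intro z w h
  rw [Om_apply] at *
  rw [Omega_skew, h, neg_zero]

lemma finrank_V (n : ℕ) : finrank ℝ (V n) = 2 * n := by
  simp [V, Module.finrank_prod]; ring

/-- Maximality of Lagrangian planes. -/
lemma lagrangian_mem_iff {n : ℕ} {L : Submodule ℝ (V n)} (hL : IsLagrangian n L) (z : V n) :
    z ∈ L ↔ ∀ w ∈ L, Omega n w z = 0 := by
  have horth : (Om n).orthogonal L = L := by
    have hle : L ≤ (Om n).orthogonal L := by
      intro z hz w hw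
      exact hL.2 w hw z hz
    refine (Submodule.eq_of_le_of_finrank_le hle ?_).symm
    rw [LinearMap.BilinForm.finrank_orthogonal (Om_nondegenerate n), finrank_V,
      hL.1]
    omega
  constructor
  · intro hz w hw
    rw [← horth] at hz
    exact hz w hw
  · intro h
    rw [← horth]
    exact fun w hw => h w hw

section Kashiwara

variable {n : ℕ} (L L' L'' : Submodule ℝ (V n))

/-- The symmetrized Kashiwara bilinear form on `L × L' × L''`. -/
def Bt : LinearMap.BilinForm ℝ (↥L × ↥L' × ↥L'') :=
  LinearMap.mk₂ ℝ (fun t s =>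
    (Omega n t.1 s.2.1 + Omega n s.1 t.2.1 + Omega n t.2.1 s.2.2 + Omega n s.2.1 t.2.2
      + Omega n t.2.2 s.1 + Omega n s.2.2 t.1) / 2)
    (by intro t t' s
        simp only [Prod.fst_add, Prod.snd_add, Submodule.coe_add, Omega_add_left,
          Omega_add_right]
        ring)
    (by intro c t s
        simp only [Prod.smul_fst, Prod.smul_snd, Submodule.coe_smul, Omega_smul_left,
          Omega_smul_right, smul_eq_mul]
        ring)
    (by intro t s s'
        simp only [Prod.fst_add, Prod.snd_add, Submodule.coe_add, Omega_add_left,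
          Omega_add_right]
        ring)
    (by intro c t s
        simp only [Prod.smul_fst, Prod.smul_snd, Submodule.coe_smul, Omega_smul_left,
          Omega_smul_right, smul_eq_mul]
        ring)

lemma Bt_apply (t s : ↥L × ↥L' × ↥L'') :
    Bt L L' L'' t s =
    (Omega n t.1 s.2.1 + Omega n s.1 t.2.1 + Omega n t.2.1 s.2.2 + Omega n s.2.1 t.2.2
      + Omega n t.2.2 s.1 + Omega n s.2.2 t.1) / 2 := rfl

lemma Bt_symm : (Bt L L' L'').IsSymm := by
  constructor
  intro t s
  simp only [RingHom.id_apply, Bt_apply]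
  ring

lemma Bt_diag (t : ↥L × ↥L' × ↥L'') : Bt L L' L'' t t = tripleForm n L L' L'' t := by
  rw [Bt_apply, tripleForm]
  have h1 := Omega_skew n (t.2.2 : V n) (t.1 : V n)
  ring

/-- The parametrization of the radical. -/
def phi : (↥(L ⊓ L') × ↥(L' ⊓ L'') × ↥(L'' ⊓ L)) →ₗ[ℝ] (↥L × ↥L' × ↥L'') where
  toFun x :=
    (⟨(x.1 : V n) + (x.2.2 : V n), add_mem (Submodule.mem_inf.mp x.1.2).1
        (Submodule.mem_inf.mp x.2.2.2).2⟩,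
     ⟨(x.1 : V n) + (x.2.1 : V n), add_mem (Submodule.mem_inf.mp x.1.2).2
        (Submodule.mem_inf.mp x.2.1.2).1⟩,
     ⟨(x.2.1 : V n) + (x.2.2 : V n), add_mem (Submodule.mem_inf.mp x.2.1.2).2
        (Submodule.mem_inf.mp x.2.2.2).1⟩)
  map_add' x y := by
    ext <;> simp <;> abel
  map_smul' c x := by
    ext <;> simp <;> module

lemma phi_injective : Function.Injective (phi L L' L'') := by
  rw [← LinearMap.ker_eq_bot, eq_bot_iff]
  rintro ⟨a, b, c⟩ hx
  simp only [LinearMap.mem_ker, phi, LinearMap.coe_mk, AddHom.coe_mk, Prod.mk_eq_zero] at hx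
  obtain ⟨h1, h2, h3⟩ := hx
  have e1 : (a : V n) + (c : V n) = 0 := congrArg Subtype.val h1
  have e2 : (a : V n) + (b : V n) = 0 := congrArg Subtype.val h2
  have e3 : (b : V n) + (c : V n) = 0 := congrArg Subtype.val h3
  have hb : (b : V n) = 0 := by
    have h2b : (2 : ℝ) • (b : V n) = 0 := by
      have : (2 : ℝ) • (b : V n) = ((a : V n) + (b : V n)) + ((b : V n) + (c : V n))
          - ((a : V n) + (c : V n)) := by module
      rw [this, e1, e2, e3]; simp
    rcases smul_eq_zero.mp h2b with h | h
    · norm_num at h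
    · exact h
  have ha : (a : V n) = 0 := by rw [hb] at e2; simpa using e2
  have hc : (c : V n) = 0 := by rw [ha] at e1; simpa using e1
  simp only [Submodule.mem_bot, Prod.mk_eq_zero]
  exact ⟨Subtype.ext ha, Subtype.ext hb, Subtype.ext hc⟩

lemma phi_range (hL : IsLagrangian n L) (hL' : IsLagrangian n L') (hL'' : IsLagrangian n L'') :
    LinearMap.range (phi L L' L'') = (Bt L L' L'').orthogonal ⊤ := by
  apply le_antisymm
  · rintro t ⟨x, rfl⟩
    intro s _
    show Bt L L' L'' s (phi L L' L'' x) = 0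
    obtain ⟨a, b, c⟩ := x
    rw [Bt_apply]
    simp only [phi, LinearMap.coe_mk, AddHom.coe_mk]
    simp only [Omega_add_left, Omega_add_right]
    have h1 : Omega n (s.1 : V n) (a : V n) = 0 :=
      hL.2 s.1 s.1.2 a (Submodule.mem_inf.mp a.2).1
    have h2 : Omega n (c : V n) (s.1 : V n) = 0 :=
      hL.2 c (Submodule.mem_inf.mp c.2).2 s.1 s.1.2
    have h3 : Omega n (a : V n) (s.2.1 : V n) = 0 :=
      hL'.2 a (Submodule.mem_inf.mp a.2).2 s.2.1 s.2.1.2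
    have h4 : Omega n (s.2.1 : V n) (b : V n) = 0 :=
      hL'.2 s.2.1 s.2.1.2 b (Submodule.mem_inf.mp b.2).1
    have h5 : Omega n (b : V n) (s.2.2 : V n) = 0 :=
      hL''.2 b (Submodule.mem_inf.mp b.2).2 s.2.2 s.2.2.2
    have h6 : Omega n (s.2.2 : V n) (c : V n) = 0 :=
      hL''.2 s.2.2 s.2.2.2 c (Submodule.mem_inf.mp c.2).1
    have k1 := Omega_skew n (s.1 : V n) (b : V n)
    have k2 := Omega_skew n (c : V n) (s.2.1 : V n)
    have k3 := Omega_skew n (a : V n) (s.2.2 : V n)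
    linarith
  · intro t ht
    rw [LinearMap.BilinForm.mem_orthogonal_iff] at ht
    -- derive the three difference conditions
    have hd1 : (t.2.1 : V n) - (t.2.2 : V n) ∈ L := by
      rw [lagrangian_mem_iff hL]
      intro w hw
      have := ht (⟨w, hw⟩, 0, 0) Submodule.mem_top
      rw [Bt_apply] at this
      simp only [Prod.fst, Prod.snd, ZeroMemClass.coe_zero, Omega_zero_left,
        Omega_zero_right] at this
      rw [Omega_sub_right]
      have k := Omega_skew n (t.2.2 : V n) (w : V n)
      linarith
    have hd2 : (t.2.2 : V n) - (t.1 : V n) ∈ L' := by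
      rw [lagrangian_mem_iff hL']
      intro w hw
      have := ht (0, ⟨w, hw⟩, 0) Submodule.mem_top
      rw [Bt_apply] at this
      simp only [Prod.fst, Prod.snd, ZeroMemClass.coe_zero, Omega_zero_left,
        Omega_zero_right] at this
      rw [Omega_sub_right]
      have k := Omega_skew n (t.1 : V n) (w : V n)
      linarith
    have hd3 : (t.1 : V n) - (t.2.1 : V n) ∈ L'' := by
      rw [lagrangian_mem_iff hL'']
      intro w hw
      have := ht (0, 0, ⟨w, hw⟩) Submodule.mem_top
      rw [Bt_apply] at this
      simp only [Prod.fst, Prod.snd, ZeroMemClass.coe_zero, Omega_zero_left,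
        Omega_zero_right] at this
      rw [Omega_sub_right]
      have k := Omega_skew n (t.2.1 : V n) (w : V n)
      linarith
    -- build the preimage
    set t1 := (t.1 : V n); set t2 := (t.2.1 : V n); set t3 := (t.2.2 : V n)
    have ha : (2⁻¹ : ℝ) • (t1 + t2 - t3) ∈ L ⊓ L' := by
      rw [Submodule.mem_inf]
      constructor
      · apply Submodule.smul_mem
        have : t1 + t2 - t3 = t1 + (t2 - t3) := by abel
        rw [this]; exact add_mem t.1.2 hd1
      · apply Submodule.smul_mem
        have : t1 + t2 - t3 = t2 - (t3 - t1) := by abel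
        rw [this]; exact sub_mem t.2.1.2 hd2
    have hb : (2⁻¹ : ℝ) • (t2 + t3 - t1) ∈ L' ⊓ L'' := by
      rw [Submodule.mem_inf]
      constructor
      · apply Submodule.smul_mem
        have : t2 + t3 - t1 = t2 + (t3 - t1) := by abel
        rw [this]; exact add_mem t.2.1.2 hd2
      · apply Submodule.smul_mem
        have : t2 + t3 - t1 = t3 - (t1 - t2) := by abel
        rw [this]; exact sub_mem t.2.2.2 hd3
    have hc : (2⁻¹ : ℝ) • (t3 + t1 - t2) ∈ L'' ⊓ L := by
      rw [Submodule.mem_inf]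
      constructor
      · apply Submodule.smul_mem
        have : t3 + t1 - t2 = t3 + (t1 - t2) := by abel
        rw [this]; exact add_mem t.2.2.2 hd3
      · apply Submodule.smul_mem
        have : t3 + t1 - t2 = t1 - (t2 - t3) := by abel
        rw [this]; exact sub_mem t.1.2 hd1
    refine ⟨(⟨_, ha⟩, ⟨_, hb⟩, ⟨_, hc⟩), ?_⟩
    simp only [phi, LinearMap.coe_mk, AddHom.coe_mk]
    rw [Prod.ext_iff, Prod.ext_iff]
    refine ⟨Subtype.ext ?_, Subtype.ext ?_, Subtype.ext ?_⟩
    · show (2⁻¹ : ℝ) • (t1 + t2 - t3) + (2⁻¹ : ℝ) • (t3 + t1 - t2) = t1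
      module
    · show (2⁻¹ : ℝ) • (t1 + t2 - t3) + (2⁻¹ : ℝ) • (t2 + t3 - t1) = t2
      module
    · show (2⁻¹ : ℝ) • (t2 + t3 - t1) + (2⁻¹ : ℝ) • (t3 + t1 - t2) = t3
      module

end Kashiwara

end Aux


/-- the index of inertia (τ - ∂dim + n)/2 is an integer. -/
theorem inert_is_integer (n : ℕ) (L L' L'' : Submodule ℝ (V n))
    (hL : IsLagrangian n L) (hL' : IsLagrangian n L') (hL'' : IsLagrangian n L'') :
    ∃ k : ℤ, tau n L L' L'' - ddim n L L' L'' + n = 2 * k := by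
  classical
  set Q := tripleForm n L L' L''
  have hQ : Q = fun t => Bt L L' L'' t t := by
    funext t; rw [Bt_diag]
  -- Sylvester count
  have hcount := sylvester_count (Bt L L' L'') (Bt_symm L L' L'')
  have hEdim : Module.finrank ℝ (↥L × ↥L' × ↥L'') = 3 * n := by
    rw [Module.finrank_prod, Module.finrank_prod, hL.1, hL'.1, hL''.1]; ring
  -- radical dimension
  have hrad : Module.finrank ℝ ((Bt L L' L'').orthogonal ⊤)
      = Module.finrank ℝ ↥(L ⊓ L') + Module.finrank ℝ ↥(L' ⊓ L'') + Module.finrank ℝ ↥(L'' ⊓ L) := by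
    rw [← phi_range L L' L'' hL hL' hL'',
      LinearMap.finrank_range_of_inj (phi_injective L L' L''),
      Module.finrank_prod, Module.finrank_prod]
    ring
  have hcomm : Module.finrank ℝ ↥(L'' ⊓ L) = Module.finrank ℝ ↥(L ⊓ L'') := by rw [inf_comm]
  -- unfold tau, ddim
  rw [tau, ddim]
  have hpos : posIndex Q = posIndex fun m => Bt L L' L'' m m := by rw [hQ]
  have hneg : negIndex Q = posIndex fun m => -(Bt L L' L'' m m) := by
    rw [negIndex, hQ]
  rw [show posIndex (tripleForm n L L' L'') = posIndex Q from rfl,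
    show negIndex (tripleForm n L L' L'') = negIndex Q from rfl, hpos, hneg]
  rw [hEdim, hrad, hcomm] at hcount
  refine ⟨2 * (n : ℤ) - Module.finrank ℝ ↥(L ⊓ L') - Module.finrank ℝ ↥(L' ⊓ L'')
    - posIndex fun m => -(Bt L L' L'' m m), ?_⟩
  have h1 : (posIndex fun m => Bt L L' L'' m m) + (posIndex fun m => -(Bt L L' L'' m m))
      + (Module.finrank ℝ ↥(L ⊓ L') + Module.finrank ℝ ↥(L' ⊓ L'') + Module.finrank ℝ ↥(L ⊓ L'')) = 3 * n :=
    hcount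
  push_cast
  push_cast at h1
  linarith
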